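/- Let W be a group, χ an automorphism of W with χ ∘ χ = id, and M, K normal subgroups of W with [W : K] finite. If [M : M ∩ χ(M)] is infinite, then [M ∩ K : (M ∩ K) ∩ χ(M ∩ K)] is infinite. -/

import Mathlib

/-- If `[M : M ∩ χ(M)]` is infinite (relIndex `0`) and `[W : K]` is finite, then
`[M ∩ K : (M ∩ K) ∩ χ(M ∩ K)]` is infinite (relIndex `0`). -/
theorem stmt_9 {W : Type*} [Group W] (χ : W ≃* W) (hχ : ∀ w, χ (χ w) = w)
    (M K : Subgroup W) [M.Normal] [K.Normal] [K.FiniteIndex]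
    (h : (M.map χ.toMonoidHom).relIndex M = 0) :
    ((M ⊓ K).map χ.toMonoidHom).relIndex (M ⊓ K) = 0 := by
  by_contra hne
  set A : Subgroup W := ((M ⊓ K).map χ.toMonoidHom) ⊓ (M ⊓ K) with hA
  have hAMK : A ≤ M ⊓ K := inf_le_right
  have hMKM : (M ⊓ K : Subgroup W) ≤ M := inf_le_left
  have h1 : A.relIndex (M ⊓ K) ≠ 0 := by
    rwa [hA, Subgroup.inf_relIndex_right]
  have h2 : (M ⊓ K).relIndex M ≠ 0 := by
    rw [Subgroup.inf_relIndex_left]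
    intro h0
    have := Subgroup.relIndex_dvd_index_of_normal K M
    rw [h0] at this
    exact Subgroup.FiniteIndex.index_ne_zero (eq_zero_of_zero_dvd this)
  have h3 : A.relIndex M ≠ 0 := by
    rw [← Subgroup.relIndex_mul_relIndex A (M ⊓ K) M hAMK hMKM]
    exact mul_ne_zero h1 h2
  have hAle : A ≤ (M.map χ.toMonoidHom) ⊓ M := by
    apply inf_le_inf
    · exact Subgroup.map_mono inf_le_left
    · exact inf_le_left
  have h4 : ((M.map χ.toMonoidHom) ⊓ M).relIndex M ≠ 0 := fun h0 =>
    h3 (Subgroup.relIndex_eq_zero_of_le_left hAle h0)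
  rw [Subgroup.inf_relIndex_right] at h4
  exact h4 h
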